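/- Suppose a(t) ≥ 0 and c(t) ≤ 0 on [t₀,∞) (a, b, c continuous). If x₀ solves x' + a(t)x² + b(t)x + c(t) = 0 on [t₀,∞) with x₀(t₀) = 0 and c is not identically zero on any interval [t₀,∞), then x₀(t) ≥ 0 for all t ≥ t₀. -/

import Mathlib

open Set Real

theorem stmt3 (t₀ : ℝ) (a b c x₀ : ℝ → ℝ)
    (ha : ContinuousOn a (Ici t₀)) (hb : ContinuousOn b (Ici t₀))
    (hc : ContinuousOn c (Ici t₀))
    (ha0 : ∀ t ≥ t₀, 0 ≤ a t) (hc0 : ∀ t ≥ t₀, c t ≤ 0)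
    (hx : ∀ t ≥ t₀, HasDerivAt x₀ (-(a t * x₀ t ^ 2 + b t * x₀ t + c t)) t)
    (hx0 : x₀ t₀ = 0)
    (hcne : ∀ t₁ ≥ t₀, ∃ s ≥ t₁, c s ≠ 0) :
    ∀ t ≥ t₀, 0 ≤ x₀ t := by
  have hmax : Continuous (fun t : ℝ => max t t₀) := continuous_id.max continuous_const
  have hmem : ∀ t : ℝ, max t t₀ ∈ Ici t₀ := fun t => le_max_right t t₀
  have hx₀cont : ContinuousOn x₀ (Ici t₀) := fun t ht =>
    ((hx t ht).continuousAt).continuousWithinAt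
  set g : ℝ → ℝ := fun t => a (max t t₀) * x₀ (max t t₀) + b (max t t₀) with hgdef
  have hgc : Continuous g :=
    ((ha.comp_continuous hmax hmem).mul (hx₀cont.comp_continuous hmax hmem)).add
      (hb.comp_continuous hmax hmem)
  set G : ℝ → ℝ := fun t => ∫ s in t₀..t, g s with hGdef
  have hG : ∀ t : ℝ, HasDerivAt G (g t) t := fun t =>
    intervalIntegral.integral_hasDerivAt_right (hgc.intervalIntegrable t₀ t)
      (hgc.stronglyMeasurableAtFilter _ _) hgc.continuousAt
  set u : ℝ → ℝ := fun t => x₀ t * Real.exp (G t) with hudef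
  have hu : ∀ t ≥ t₀, HasDerivAt u (-(c t) * Real.exp (G t)) t := by
    intro t ht
    have h1 := (hx t ht).mul ((hG t).exp)
    have hgt : g t = a t * x₀ t + b t := by
      simp only [hgdef, max_eq_left ht]
    refine h1.congr_deriv ?_
    rw [hgt]
    ring
  have hucont : ContinuousOn u (Ici t₀) := fun t ht =>
    ((hu t ht).continuousAt).continuousWithinAt
  have hmono : MonotoneOn u (Ici t₀) := by
    apply monotoneOn_of_hasDerivWithinAt_nonneg (convex_Ici t₀) hucont
      (f' := fun t => -(c t) * Real.exp (G t))
    · intro x hxI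
      rw [interior_Ici] at hxI
      exact (hu x (le_of_lt hxI)).hasDerivWithinAt
    · intro x hxI
      rw [interior_Ici] at hxI
      exact mul_nonneg (by linarith [hc0 x (le_of_lt hxI)]) (Real.exp_pos _).le
  intro t ht
  have h0 : u t₀ ≤ u t := hmono self_mem_Ici ht ht
  have hu0 : u t₀ = 0 := by simp [hudef, hx0]
  have : 0 ≤ x₀ t * Real.exp (G t) := by rw [← hu0]; exact h0
  exact nonneg_of_mul_nonneg_left this (Real.exp_pos _)
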